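/- Let H = (V, E_H) be an undirected graph on vertex set V = {1,...,n}, and let G be the complete graph on V with unit edge lengths. Set S = E_H (as a set of vertex pairs) and fix T ≥ 1. Then a set W ⊆ V is a vertex cover of H if and only if removing W from G makes d(u,v) > T for every pair (u,v) ∈ S. Hence the minimum vertex cover size of H equals the minimum size of a T-MULTI-PCUT solution on this instance. -/

import Mathlib

def pathWeight {V : Type*} (w : V → V → ℝ) (p : List V) : ℝ :=
  ((p.zip p.tail).map fun q => w q.1 q.2).sum

def IsPath {V : Type*} (E : V → V → Prop) (s t : V) (p : List V) : Prop :=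
  p ≠ [] ∧ p.head? = some s ∧ p.getLast? = some t ∧ p.Chain' E ∧ p.Nodup

lemma stmt13_aux {V : Type*} {R : V → V → Prop} :
    ∀ (l : List V) (a b : V), List.Chain' R (a :: b :: l) →
      ∃ s t, (a :: b :: l).getLast? = some t ∧ R s t := by
  intro l
  induction l with
  | nil => intro a b h; exact ⟨a, b, rfl, (List.isChain_cons_cons.mp h).1⟩
  | cons c l ih =>
      intro a b h
      obtain ⟨s, t, hl, hR⟩ := ih b c (List.isChain_cons_cons.mp h).2
      exact ⟨s, t, by rw [List.getLast?_cons_cons]; exact hl, hR⟩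

/-- let `H` be a graph on `V` and `G` the complete graph on `V` with
unit edge lengths, target set `S = E(H)`, and `T ≥ 1`. Then `W` is a vertex cover of
`H` iff removing `W` from `G` makes every remaining path between the endpoints of an
edge of `H` longer than `T` (i.e. `d(u,v) > T`); hence the minimum vertex-cover size
equals the minimum T-MULTI-PCUT size. -/
theorem stmt13 {V : Type*} [Fintype V] [DecidableEq V]
    (H : SimpleGraph V) (T : ℝ) (hT : 1 ≤ T) :
    (∀ W : Finset V,
      ((∀ u v : V, H.Adj u v → u ∈ W ∨ v ∈ W)
        ↔ (∀ u v : V, H.Adj u v → ∀ q : List V,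
            IsPath (fun a b => a ≠ b ∧ a ∉ W ∧ b ∉ W) u v q →
            T < pathWeight (fun _ _ => (1 : ℝ)) q)))
    ∧ sInf {m : ℕ | ∃ W : Finset V,
          (∀ u v : V, H.Adj u v → u ∈ W ∨ v ∈ W) ∧ W.card = m}
      = sInf {m : ℕ | ∃ W : Finset V,
          (∀ u v : V, H.Adj u v → ∀ q : List V,
            IsPath (fun a b => a ≠ b ∧ a ∉ W ∧ b ∉ W) u v q →
            T < pathWeight (fun _ _ => (1 : ℝ)) q) ∧ W.card = m} := by
  have key : ∀ W : Finset V,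
      ((∀ u v : V, H.Adj u v → u ∈ W ∨ v ∈ W)
        ↔ (∀ u v : V, H.Adj u v → ∀ q : List V,
            IsPath (fun a b => a ≠ b ∧ a ∉ W ∧ b ∉ W) u v q →
            T < pathWeight (fun _ _ => (1 : ℝ)) q)) := by
    intro W
    constructor
    · intro hcov u v huv q hq
      obtain ⟨hne, hhead, hlast, hchain, _⟩ := hq
      exfalso
      match q, hne with
      | [a], _ =>
          simp only [List.head?_cons] at hhead
          simp only [List.getLast?_singleton] at hlast
          exact huv.ne (by rw [← Option.some_inj.mp hhead, Option.some_inj.mp hlast])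
      | a :: b :: l, _ =>
          have hau : a = u := by simpa using hhead
          have hfirst : a ≠ b ∧ a ∉ W ∧ b ∉ W := (List.isChain_cons_cons.mp hchain).1
          have hu : u ∉ W := hau ▸ hfirst.2.1
          have hv : v ∉ W := by
            obtain ⟨s, t, hlt, hR⟩ := stmt13_aux l a b hchain
            rw [hlast] at hlt
            exact (Option.some_inj.mp hlt) ▸ hR.2.2
          rcases hcov u v huv with h | h
          · exact hu h
          · exact hv h
    · intro hpath u v huv
      by_contra hcon
      push_neg at hcon
      have := hpath u v huv [u, v]
        ⟨by simp, by simp, by simp, by simp [List.Chain', huv.ne, hcon.1, hcon.2], by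
          simp [huv.ne]⟩
      simp [pathWeight] at this
      linarith
  refine ⟨key, ?_⟩
  congr 1
  ext m
  simp only [Set.mem_setOf_eq]
  exact ⟨fun ⟨W, h, hc⟩ => ⟨W, (key W).mp h, hc⟩,
         fun ⟨W, h, hc⟩ => ⟨W, (key W).mpr h, hc⟩⟩
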